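/- Let R be a PID and S_R(R^n) the poset of ordered pairs (P,Q) of proper submodules of R^n with P ⊕ Q = R^n, ordered by (P,Q) ≤ (P',Q') iff P ⊆ P' and Q ⊇ Q'. Then GL_n(R) acts transitively on the elements of S_R(R^n) of any fixed rank type: every (P,Q) with rank(P) = p equals A·(span(x_1,...,x_p), span(x_{p+1},...,x_n)) for some A ∈ GL_n(R), where x_1,...,x_n is the standard basis. -/

import Mathlib

/-- The submodule of `R^n` of vectors supported on the first `p` coordinates,
i.e. `span(x_1,...,x_p)` for the standard basis. -/
def lowCoords (R : Type*) [CommRing R] (n p : ℕ) : Submodule R (Fin n → R) where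
  carrier := {f | ∀ i : Fin n, p ≤ (i : ℕ) → f i = 0}
  add_mem' := fun {a b} ha hb i hi => by simp [ha i hi, hb i hi]
  zero_mem' := fun i _ => rfl
  smul_mem' := fun c f hf i hi => by simp [hf i hi]

/-- The submodule of `R^n` of vectors supported on the last `n - p` coordinates,
i.e. `span(x_{p+1},...,x_n)` for the standard basis. -/
def highCoords (R : Type*) [CommRing R] (n p : ℕ) : Submodule R (Fin n → R) where
  carrier := {f | ∀ i : Fin n, (i : ℕ) < p → f i = 0}
  add_mem' := fun {a b} ha hb i hi => by simp [ha i hi, hb i hi]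
  zero_mem' := fun i _ => rfl
  smul_mem' := fun c f hf i hi => by simp [hf i hi]

/-- Given two complementary pairs `(P, Q)` and `(L, H)` in `E` together with linear
equivalences `L ≃ P` and `H ≃ Q`, there is an automorphism of `E` sending `L` to `P`
and `H` to `Q`. -/
theorem exists_equiv_map {R E : Type*} [CommRing R] [AddCommGroup E] [Module R E]
    {P Q L H : Submodule R E} (h : IsCompl P Q) (hLH : IsCompl L H)
    (eL : L ≃ₗ[R] P) (eH : H ≃ₗ[R] Q) :
    ∃ A : E ≃ₗ[R] E,
      P = Submodule.map (A : E →ₗ[R] E) L ∧ Q = Submodule.map (A : E →ₗ[R] E) H := by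
  set A : E ≃ₗ[R] E :=
    (Submodule.prodEquivOfIsCompl L H hLH).symm ≪≫ₗ (eL.prodCongr eH) ≪≫ₗ
      Submodule.prodEquivOfIsCompl P Q h with hA
  have hAL : ∀ x : L, A x = (eL x : E) := by
    intro x
    simp [hA, Submodule.prodEquivOfIsCompl_symm_apply_left L H hLH x,
      Submodule.coe_prodEquivOfIsCompl', LinearEquiv.prodCongr_apply]
  have hAH : ∀ x : H, A x = (eH x : E) := by
    intro x
    simp [hA, Submodule.prodEquivOfIsCompl_symm_apply_right L H hLH x,
      Submodule.coe_prodEquivOfIsCompl', LinearEquiv.prodCongr_apply]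
  refine ⟨A, le_antisymm ?_ ?_, le_antisymm ?_ ?_⟩
  · intro y hy
    exact ⟨(eL.symm ⟨y, hy⟩ : E), (eL.symm ⟨y, hy⟩).2, by simp [hAL (eL.symm ⟨y, hy⟩)]⟩
  · rintro _ ⟨x, hx, rfl⟩
    simpa [hAL ⟨x, hx⟩] using (eL ⟨x, hx⟩).2
  · intro y hy
    exact ⟨(eH.symm ⟨y, hy⟩ : E), (eH.symm ⟨y, hy⟩).2, by simp [hAH (eH.symm ⟨y, hy⟩)]⟩
  · rintro _ ⟨x, hx, rfl⟩
    simpa [hAH ⟨x, hx⟩] using (eH ⟨x, hx⟩).2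

/-- `lowCoords R n p` is isomorphic to `R^p`. -/
def lowEquiv (R : Type*) [CommRing R] {n p : ℕ} (hpn : p ≤ n) :
    lowCoords R n p ≃ₗ[R] (Fin p → R) where
  toFun f j := f.1 (Fin.castLE hpn j)
  map_add' _ _ := rfl
  map_smul' _ _ := rfl
  invFun g := ⟨fun i => if h : (i : ℕ) < p then g ⟨i, h⟩ else 0,
    fun i hi => dif_neg (by omega)⟩
  left_inv f := Subtype.ext (funext fun i => by
    by_cases h : (i : ℕ) < p
    · exact dif_pos h
    · simp only [dif_neg h]
      exact (f.2 i (by omega)).symm)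
  right_inv g := funext fun j => dif_pos j.2

/-- `highCoords R n p` is isomorphic to `R^(n-p)`. -/
def highEquiv (R : Type*) [CommRing R] {n p : ℕ} (hpn : p ≤ n) :
    highCoords R n p ≃ₗ[R] (Fin (n - p) → R) where
  toFun f j := f.1 ⟨p + j, by omega⟩
  map_add' _ _ := rfl
  map_smul' _ _ := rfl
  invFun g := ⟨fun i => if h : p ≤ (i : ℕ) then g ⟨i - p, by omega⟩ else 0,
    fun i hi => dif_neg (by omega)⟩
  left_inv f := Subtype.ext (funext fun i => by
    by_cases h : p ≤ (i : ℕ)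
    · simp only [dif_pos h]
      have : (⟨p + ((i : ℕ) - p), by omega⟩ : Fin n) = i := Fin.ext (by simp; omega)
      rw [this]
    · simp only [dif_neg h]
      exact (f.2 i (by omega)).symm)
  right_inv g := funext fun j => by
    simp only []
    rw [dif_pos (show p ≤ p + (j : ℕ) by omega)]
    congr 1
    exact Fin.ext (by simp)

/-- `lowCoords` and `highCoords` are complementary. -/
lemma isCompl_lowHigh (R : Type*) [CommRing R] (n p : ℕ) :
    IsCompl (lowCoords R n p) (highCoords R n p) := by
  constructor
  · rw [Submodule.disjoint_def]
    intro f hf hf'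
    funext i
    by_cases h : (i : ℕ) < p
    · exact hf' i h
    · exact hf i (by omega)
  · rw [codisjoint_iff_le_sup]
    intro x _
    refine Submodule.mem_sup.2 ⟨fun i => if (i : ℕ) < p then x i else 0,
      fun i hi => if_neg (by omega),
      fun i => if (i : ℕ) < p then 0 else x i, fun i hi => if_pos hi, ?_⟩
    funext i
    by_cases h : (i : ℕ) < p <;> simp [h]

/-- For a PID `R`, `GL_n(R)` acts transitively on splittings `(P,Q)` of `R^n`
of a fixed rank type: every such pair with `rank P = p` is obtained from the standard
coordinate splitting `(span(x_1,...,x_p), span(x_{p+1},...,x_n))` by applying an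
automorphism `A` of `R^n`. -/
theorem stmt_4 (R : Type*) [CommRing R] [IsDomain R] [IsPrincipalIdealRing R] (n p : ℕ)
    (P Q : Submodule R (Fin n → R)) (h : IsCompl P Q) (hP : P ≠ ⊤) (hQ : Q ≠ ⊤)
    (hrank : Module.finrank R P = p) :
    ∃ A : (Fin n → R) ≃ₗ[R] (Fin n → R),
      P = Submodule.map (A : (Fin n → R) →ₗ[R] (Fin n → R)) (lowCoords R n p) ∧
      Q = Submodule.map (A : (Fin n → R) →ₗ[R] (Fin n → R)) (highCoords R n p) := by
  have hfin : Module.finrank R (Fin n → R) = n := Module.finrank_fin_fun R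
  have hpn : p ≤ n := by
    have := Submodule.finrank_le P
    omega
  have hsum : Module.finrank R P + Module.finrank R Q = n := by
    rw [← Module.finrank_prod, (Submodule.prodEquivOfIsCompl P Q h).finrank_eq, hfin]
  have hQrank : Module.finrank R Q = n - p := by omega
  exact exists_equiv_map h (isCompl_lowHigh R n p)
    ((lowEquiv R hpn).trans (Module.finBasisOfFinrankEq R P hrank).equivFun.symm)
    ((highEquiv R hpn).trans (Module.finBasisOfFinrankEq R Q hQrank).equivFun.symm)
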